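/- arXiv:2203.15457 — 9 statements merged into one kernel-verified Lean document; each statement's English description precedes it below -/
import Mathlib

section
/- Let q ≥ 3 be an integer and define G∞⁻¹_j(y) = -q·y_j/(Σ_i y_i + q) + 1 and g(y) = Π_{j=1}^{q-1} G∞⁻¹_j(y). If y ∈ ℝ^{q-1} satisfies Σ_i y_i + q > 0 and G∞⁻¹_k(y) > 0 for all k, then Σ_{i=1}^{q-1} ∂g/∂y_i(y) ≠ 0. -/
set_option maxHeartbeats 1000000 in
theorem stmt_5 (q : ℕ) (hq : 3 ≤ q)
    (y : Fin (q-1) → ℝ) (hden : 0 < ∑ i, y i + (q:ℝ))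
    (hpos : ∀ k, 0 < -(q:ℝ) * y k / (∑ i, y i + q) + 1) :
    ∑ i : Fin (q-1),
      fderiv ℝ (fun z : Fin (q-1) → ℝ => ∏ j, (-(q:ℝ) * z j / (∑ i, z i + q) + 1)) y
        (Pi.single i 1) ≠ 0 := by
  classical
  set D : ℝ := ∑ i, y i + (q:ℝ) with hDdef
  have hDne : D ≠ 0 := ne_of_gt hden
  -- the sum continuous linear map
  set sumL : (Fin (q-1) → ℝ) →L[ℝ] ℝ := ∑ i, ContinuousLinearMap.proj i with hsumL
  have hsumL_apply : ∀ z : Fin (q-1) → ℝ, sumL z = ∑ i, z i := by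
    intro z
    simp [hsumL, ContinuousLinearMap.sum_apply]
  have hS : HasFDerivAt (fun z : Fin (q-1) → ℝ => ∑ i, z i + (q:ℝ)) sumL y := by
    have h1 : (fun z : Fin (q-1) → ℝ => ∑ i, z i + (q:ℝ))
        = fun z => sumL z + (q:ℝ) := by
      funext z; rw [hsumL_apply]
    rw [h1]
    exact sumL.hasFDerivAt.add_const _
  have hInv : HasFDerivAt (fun z : Fin (q-1) → ℝ => (∑ i, z i + (q:ℝ))⁻¹)
      ((-(D^2)⁻¹) • sumL) y := by
    have := (hasDerivAt_inv (x := D) hDne).comp_hasFDerivAt_of_eq y hS hDdef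
    exact this
  -- derivative of each factor
  set L : Fin (q-1) → ((Fin (q-1) → ℝ) →L[ℝ] ℝ) := fun j =>
    ((-(q:ℝ) * y j) • ((-(D^2)⁻¹) • sumL)
      + D⁻¹ • ((-(q:ℝ)) • ContinuousLinearMap.proj j)) with hL
  have hF : ∀ j, HasFDerivAt
      (fun z : Fin (q-1) → ℝ => -(q:ℝ) * z j / (∑ i, z i + (q:ℝ)) + 1) (L j) y := by
    intro j
    have hN : HasFDerivAt (fun z : Fin (q-1) → ℝ => -(q:ℝ) * z j)
        ((-(q:ℝ)) • ContinuousLinearMap.proj j) y :=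
      (ContinuousLinearMap.proj j : (Fin (q-1) → ℝ) →L[ℝ] ℝ).hasFDerivAt.const_mul _
    have := (hN.mul hInv).add_const 1
    simp only [div_eq_mul_inv, hL]
    exact this
  set F : Fin (q-1) → ℝ := fun j => -(q:ℝ) * y j / D + 1 with hFdef
  have hprod : HasFDerivAt
      (fun z : Fin (q-1) → ℝ => ∏ j, (-(q:ℝ) * z j / (∑ i, z i + q) + 1))
      (∑ j, (∏ k ∈ Finset.univ.erase j, F k) • L j) y := by
    have := HasFDerivAt.finset_prod (u := Finset.univ)
      (g := fun j (z : Fin (q-1) → ℝ) => -(q:ℝ) * z j / (∑ i, z i + (q:ℝ)) + 1)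
      (g' := L) (fun j _ => hF j)
    exact this
  rw [hprod.fderiv]
  -- evaluate the linear maps
  have happly : ∀ i : Fin (q-1),
      (∑ j, (∏ k ∈ Finset.univ.erase j, F k) • L j) (Pi.single i 1)
        = ∑ j, (∏ k ∈ Finset.univ.erase j, F k)
            * ((-(q:ℝ) * y j) * (-(D^2)⁻¹) + D⁻¹ * (-(q:ℝ)) * ((Pi.single i 1 : Fin (q-1) → ℝ) j)) := by
    intro i
    rw [ContinuousLinearMap.sum_apply]
    refine Finset.sum_congr rfl fun j _ => ?_
    simp [hL, hsumL_apply, Finset.sum_pi_single', smul_eq_mul]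
    ring
  simp only [happly]
  rw [Finset.sum_comm]
  -- inner sums
  have hcard : (Finset.univ : Finset (Fin (q-1))).card = q - 1 := by simp
  have hn : (1:ℕ) ≤ q - 1 := by omega
  have hne : (Finset.univ : Finset (Fin (q-1))).Nonempty := by
    rw [← Finset.card_pos, hcard]; omega
  have hqpos : (0:ℝ) < q := by positivity
  -- each inner sum is negative
  have hterm : ∀ j : Fin (q-1),
      (∑ i : Fin (q-1), (∏ k ∈ Finset.univ.erase j, F k)
          * ((-(q:ℝ) * y j) * (-(D^2)⁻¹) + D⁻¹ * (-(q:ℝ)) * ((Pi.single i 1 : Fin (q-1) → ℝ) j))) < 0 := by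
    intro j
    have hPpos : 0 < ∏ k ∈ Finset.univ.erase j, F k := by
      apply Finset.prod_pos
      intro k _
      exact hpos k
    have hsum1 : ∑ i : Fin (q-1), ((Pi.single i 1 : Fin (q-1) → ℝ)) j = 1 := by
      rw [Finset.sum_pi_single]
      simp
    rw [← Finset.mul_sum]
    have hinner : ∑ i : Fin (q-1),
        ((-(q:ℝ) * y j) * (-(D^2)⁻¹) + D⁻¹ * (-(q:ℝ)) * ((Pi.single i 1 : Fin (q-1) → ℝ) j))
        = (q - 1 : ℕ) * ((q:ℝ) * y j * (D^2)⁻¹) - D⁻¹ * q := by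
      rw [Finset.sum_add_distrib, Finset.sum_const, ← Finset.mul_sum, hsum1, hcard]
      ring
    rw [hinner]
    apply mul_neg_of_pos_of_neg hPpos
    -- need (q-1) * q y j / D² < q / D, i.e. (q-1) y j < D
    have hyj : (q:ℝ) * y j < D := by
      have h1 : (q:ℝ) * y j / D < 1 := by
        have := hpos j
        rw [neg_mul, neg_div] at this
        linarith
      exact (div_lt_one hden).mp h1
    have hq1 : (0:ℝ) < (q:ℝ) - 1 := by
      have : (3:ℝ) ≤ q := by exact_mod_cast hq
      linarith
    have hkey : ((q-1:ℕ):ℝ) * ((q:ℝ) * y j) < (q:ℝ) * D := by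
      have hcast : ((q-1:ℕ):ℝ) = (q:ℝ) - 1 := by
        have h1 : (1:ℕ) ≤ q := by omega
        push_cast [Nat.cast_sub h1]
        ring
      rw [hcast]
      rcases le_or_gt 0 ((q:ℝ) * y j) with ha | ha
      · nlinarith [mul_lt_mul_of_pos_left hyj hqpos]
      · nlinarith [mul_pos hqpos hden, mul_pos hq1 (neg_pos.mpr ha)]
    rw [sub_neg]
    have hstep : ((q-1:ℕ):ℝ) * ((q:ℝ) * y j * (D^2)⁻¹)
        = (((q-1:ℕ):ℝ) * ((q:ℝ) * y j)) * (D^2)⁻¹ := by ring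
    have heq : D⁻¹ * (q:ℝ) = ((q:ℝ) * D) * (D^2)⁻¹ := by
      field_simp
    rw [hstep, heq]
    exact mul_lt_mul_of_pos_right hkey (by positivity)
  have : (∑ j : Fin (q-1), ∑ i : Fin (q-1), (∏ k ∈ Finset.univ.erase j, F k)
      * ((-(q:ℝ) * y j) * (-(D^2)⁻¹) + D⁻¹ * (-(q:ℝ)) * ((Pi.single i 1 : Fin (q-1) → ℝ) j))) < 0 :=
    Finset.sum_neg (fun j _ => hterm j) hne
  exact ne_of_lt this
end

section
/- Let q ≥ 3 be an integer and define F∞: ℝ^{q-1} → ℝ^{q-1} with coordinate functions F∞_i(x) = q(1 - e^{x_i})/(Σ_{j=1}^{q-1} e^{x_j} + 1). Then for all d > 1 and all x ∈ ℝ^{q-1}, |F_{d,i}(x) - F∞_i(x)| is bounded by a quantity tending to 0 as d → ∞, uniformly in x; here F_{d,i}(x) = d·log(1 + (q/(d+1))·(1 - e^{x_i})/(Σ_j e^{x_j} + 1 - q/(d+1))). In other words F_d converges to F∞ uniformly on ℝ^{q-1} as d → ∞. -/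
set_option maxHeartbeats 1000000 in
lemma key_est (q d e S : ℝ) (hq : 3 ≤ q) (hd : 4*q^2 ≤ d) (he : 0 < e)
    (hS : 1 ≤ S) (heS : e ≤ S) :
    |d * Real.log (1 + q/(d+1) * (1-e) / (S - q/(d+1))) - q*(1-e)/S| ≤ 11*q^2/(d+1) := by
  have hd0 : (0:ℝ) < d := by nlinarith
  have hd1 : (0:ℝ) < d + 1 := by linarith
  set ε := q/(d+1) with hε
  have hε0 : 0 < ε := div_pos (by linarith) hd1
  have hε4 : ε ≤ 1/4 := by
    rw [hε, div_le_iff₀ hd1]; nlinarith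
  have hdε : d * ε ≤ q := by
    have h : d * ε = d*q/(d+1) := by rw [hε]; ring
    rw [h, div_le_iff₀ hd1]; nlinarith
  have hSc : S/2 ≤ S - ε := by linarith
  have hSc0 : 0 < S - ε := by linarith
  have hS0 : 0 < S := by linarith
  have h1e : |1-e| ≤ S := abs_le.2 ⟨by linarith, by linarith⟩
  set t := ε * (1-e) / (S - ε) with htdef
  have ht : |t| ≤ 2*ε := by
    rw [htdef, abs_div, abs_mul, abs_of_pos hε0, abs_of_pos hSc0, div_le_iff₀ hSc0]
    nlinarith [abs_nonneg (1-e)]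
  have ht2 : |t| ≤ 1/2 := by linarith
  have ht1 : |t| < 1 := by linarith
  have hlog : |Real.log (1+t) - t| ≤ 2*t^2 := by
    have h := Real.abs_log_sub_add_sum_range_le (x := -t) (by rwa [abs_neg]) 1
    simp only [Finset.sum_range_one, pow_one, Nat.cast_zero, zero_add, div_one,
      sub_neg_eq_add, abs_neg] at h
    have h2 : |Real.log (1+t) - t| ≤ |t|^2 / (1 - |t|) := by
      have heq : -t + Real.log (1+t) = Real.log (1+t) - t := by ring
      rwa [heq] at h
    have h3 : |t|^2 / (1-|t|) ≤ 2*t^2 := by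
      rw [div_le_iff₀ (by linarith : (0:ℝ) < 1 - |t|)]
      nlinarith [sq_abs t, sq_nonneg t, abs_nonneg t]
    linarith
  have hA : |d * Real.log (1+t) - d * t| ≤ 8*q*ε := by
    have heq : d * Real.log (1+t) - d * t = d * (Real.log (1+t) - t) := by ring
    rw [heq, abs_mul, abs_of_pos hd0]
    have h1 : d * |Real.log (1+t) - t| ≤ d * (2*t^2) :=
      mul_le_mul_of_nonneg_left hlog hd0.le
    have h2 : t^2 ≤ 4*ε^2 := by nlinarith [abs_nonneg t, sq_abs t]
    nlinarith [mul_le_mul_of_nonneg_left h2 hd0.le,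
      mul_le_mul_of_nonneg_right hdε hε0.le]
  have hB : |d * t - q*(1-e)/S| ≤ (2*q^2+2*q)/(d+1) := by
    have hq_eq : q = ε * (d+1) := by rw [hε]; field_simp
    have hkey : d * t - q*(1-e)/S = q*(1-e)*(q - S)/((d+1)*(S-ε)*S) := by
      rw [htdef, hq_eq]
      field_simp
      ring
    rw [hkey, abs_div, abs_of_pos (by positivity : (0:ℝ) < (d+1)*(S-ε)*S)]
    have hnum : |q*(1-e)*(q-S)| ≤ q*S*(q+S) := by
      rw [abs_mul, abs_mul, abs_of_pos (by linarith : (0:ℝ) < q)]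
      have hqS : |q - S| ≤ q + S := abs_le.2 ⟨by linarith, by linarith⟩
      have hm : |1-e| * |q-S| ≤ S * (q+S) :=
        mul_le_mul h1e hqS (abs_nonneg _) hS0.le
      nlinarith [abs_nonneg (1-e), abs_nonneg (q-S)]
    have hden : (d+1)*(S/2)*S ≤ (d+1)*(S-ε)*S :=
      mul_le_mul_of_nonneg_right
        (mul_le_mul_of_nonneg_left hSc (by positivity : (0:ℝ) ≤ d+1)) hS0.le
    have hstep : (q*S*(q+S)) / ((d+1)*(S/2)*S) ≤ (2*q^2+2*q)/(d+1) := by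
      rw [div_le_div_iff₀ (by positivity) hd1]
      have h1 : q*(q+S) ≤ (q^2+q)*S := by nlinarith
      calc q*S*(q+S)*(d+1) = (q*(q+S)) * (S*(d+1)) := by ring
        _ ≤ ((q^2+q)*S) * (S*(d+1)) :=
            mul_le_mul_of_nonneg_right h1 (by positivity)
        _ = (2*q^2+2*q)*((d+1)*(S/2)*S) := by ring
    calc |q*(1-e)*(q-S)| / ((d+1)*(S-ε)*S)
        ≤ (q*S*(q+S)) / ((d+1)*(S/2)*S) :=
          div_le_div₀ (by positivity) hnum (by positivity) hden
      _ ≤ (2*q^2+2*q)/(d+1) := hstep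
  have h8 : 8*q*ε = 8*q^2/(d+1) := by rw [hε]; ring
  calc |d * Real.log (1+t) - q*(1-e)/S|
      ≤ |d * Real.log (1+t) - d * t| + |d * t - q*(1-e)/S| := abs_sub_le _ _ _
    _ ≤ 8*q^2/(d+1) + (2*q^2+2*q)/(d+1) := by rw [← h8]; linarith
    _ ≤ 11*q^2/(d+1) := by
        rw [← add_div, div_le_div_iff₀ hd1 hd1]
        nlinarith [mul_nonneg (by nlinarith : (0:ℝ) ≤ q^2 - 2*q) hd1.le]

theorem stmt_6 (q : ℕ) (hq : 3 ≤ q) :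
    TendstoUniformly
      (fun (d : ℝ) (x : Fin (q-1) → ℝ) (i : Fin (q-1)) =>
        d * Real.log (1 + ((q:ℝ)/(d+1)) * (1 - Real.exp (x i)) /
          (∑ j, Real.exp (x j) + 1 - (q:ℝ)/(d+1))))
      (fun (x : Fin (q-1) → ℝ) (i : Fin (q-1)) =>
        (q:ℝ) * (1 - Real.exp (x i)) / (∑ j, Real.exp (x j) + 1))
      Filter.atTop := by
  have hq3 : (3:ℝ) ≤ (q:ℝ) := by exact_mod_cast hq
  rw [Metric.tendstoUniformly_iff]
  intro δ hδ
  filter_upwards [Filter.eventually_ge_atTop (4*(q:ℝ)^2),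
    Filter.eventually_gt_atTop (11*(q:ℝ)^2/δ)] with d hd1 hd2
  intro x
  rw [dist_pi_lt_iff hδ]
  intro i
  rw [Real.dist_eq, abs_sub_comm]
  set S := (∑ j, Real.exp (x j)) + 1 with hSdef
  have hsum : (0:ℝ) ≤ ∑ j, Real.exp (x j) :=
    Finset.sum_nonneg fun j _ => (Real.exp_pos _).le
  have hS : 1 ≤ S := by rw [hSdef]; linarith
  have heS : Real.exp (x i) ≤ S := by
    have h := Finset.single_le_sum (f := fun j => Real.exp (x j))
      (fun j _ => (Real.exp_pos _).le) (Finset.mem_univ i)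
    rw [hSdef]; linarith
  have key := key_est (q:ℝ) d (Real.exp (x i)) S hq3 hd1 (Real.exp_pos _) hS heS
  have hdpos : (0:ℝ) < d + 1 := by nlinarith
  have hfin : 11*(q:ℝ)^2/(d+1) < δ := by
    rw [div_lt_iff₀ hdpos]
    have h2 := (div_lt_iff₀ hδ).1 hd2
    nlinarith
  exact lt_of_le_of_lt key hfin
end

section
/- Let q ≥ 3 be an integer, let F∞: ℝ^{q-1} → ℝ^{q-1} have coordinate functions F∞_i(x) = q(1 - e^{x_i})/(Σ_{j=1}^{q-1} e^{x_j} + 1). Let S_q act on ℝ^{q-1} via the standard representation (identifying ℝ^{q-1} with the span of e_1 - e_q, …, e_{q-1} - e_q in ℝ^q). Then F∞ is S_q-equivariant: π · F∞(x) = F∞(π · x) for all π ∈ S_q and x ∈ ℝ^{q-1}. -/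
/-- Extension of a vector in `ℝ^n` to `ℝ^(n+1)` by appending a zero last coordinate. -/
def extZero (n : ℕ) (x : Fin n → ℝ) : Fin (n+1) → ℝ :=
  fun j => if h : (j : ℕ) < n then x ⟨j, h⟩ else 0

/-- The standard representation of `S_{n+1}` on `ℝ^n`:
`(π·x)_i = X_{π⁻¹(i)} - X_{π⁻¹(n+1)}` where `X` is `x` extended by a zero last coordinate. -/
def stdAct (n : ℕ) (π : Equiv.Perm (Fin (n+1))) (x : Fin n → ℝ) : Fin n → ℝ :=
  fun i => extZero n x (π.symm i.castSucc) - extZero n x (π.symm (Fin.last n))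

/-- The limit map `F∞` with `q = n+1` colors, acting on `ℝ^n = ℝ^{q-1}`. -/
noncomputable def Finfty (n : ℕ) (x : Fin n → ℝ) : Fin n → ℝ :=
  fun i => ((n:ℝ)+1) * (1 - Real.exp (x i)) / (∑ j, Real.exp (x j) + 1)

theorem stmt_7 (n : ℕ) (hn : 2 ≤ n) (π : Equiv.Perm (Fin (n+1))) (x : Fin n → ℝ) :
    stdAct n π (Finfty n x) = Finfty n (stdAct n π x) := by
  set X := extZero n x with hX
  have hXc : ∀ j : Fin n, X j.castSucc = x j := by
    intro j
    simp [hX, extZero, Fin.is_lt]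
  have hXl : X (Fin.last n) = 0 := by simp [hX, extZero]
  set S := ∑ j, Real.exp (x j) with hS
  have hSpos : 0 < S + 1 := by positivity
  have hA : ∑ k : Fin (n+1), Real.exp (X k) = S + 1 := by
    rw [Fin.sum_univ_castSucc]
    simp [hXc, hXl, hS]
  set c := X (π.symm (Fin.last n)) with hc
  have hstd : ∀ j : Fin n, stdAct n π x j = X (π.symm j.castSucc) - c := fun j => rfl
  have hB : (∑ j : Fin n, Real.exp (stdAct n π x j)) + 1 = (S + 1) * Real.exp (-c) := by
    have h1 : ∑ k : Fin (n+1), Real.exp (X (π.symm k)) = ∑ k, Real.exp (X k) :=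
      Equiv.sum_comp π.symm (fun k => Real.exp (X k))
    have h2 : (∑ j : Fin n, Real.exp (stdAct n π x j)) + 1
        = (∑ k : Fin (n+1), Real.exp (X (π.symm k))) * Real.exp (-c) := by
      rw [Fin.sum_univ_castSucc (f := fun k => Real.exp (X (π.symm k))), add_mul,
        Finset.sum_mul]
      congr 1
      · exact Finset.sum_congr rfl fun j _ => by
          rw [hstd, Real.exp_sub, Real.exp_neg, div_eq_mul_inv]
      · rw [← hc, ← Real.exp_add, add_neg_cancel, Real.exp_zero]
    rw [h2, h1, hA]
  have hC : ∀ k : Fin (n+1), extZero n (Finfty n x) k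
      = ((n:ℝ)+1) * (1 - Real.exp (X k)) / (S + 1) := by
    intro k
    by_cases h : (k : ℕ) < n
    · simp [extZero, h, Finfty, hX, hS]
    · simp [extZero, h, hX]
  funext i
  have hL : stdAct n π (Finfty n x) i
      = ((n:ℝ)+1) * (1 - Real.exp (X (π.symm i.castSucc))) / (S + 1)
        - ((n:ℝ)+1) * (1 - Real.exp c) / (S + 1) := by
    rw [stdAct, hC, hC, hc]
  rw [hL]
  show _ = ((n:ℝ)+1) * (1 - Real.exp (stdAct n π x i)) / (∑ j, Real.exp (stdAct n π x j) + 1)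
  rw [hB, hstd, Real.exp_sub, Real.exp_neg]
  have hec : Real.exp c ≠ 0 := Real.exp_ne_zero c
  have hS1 : S + 1 ≠ 0 := ne_of_gt hSpos
  field_simp
  ring
end

section
/- For every integer q ≥ 2, define f(x) = -q(e^{-x/(q-1)} - 1)/((q-1)e^{-x/(q-1)} + 1) and g(x) = q(q-1)(e^x - 1)/((q-1)e^x + 1), and φ = g ∘ f. Then for all x > 0, φ(x) < x. -/
lemma pade_aux (s : ℝ) (hs : 0 < s) : Real.exp s * (2 - s) < 2 + s := by
  have key : StrictMonoOn (fun y : ℝ => 2 + y - Real.exp y * (2 - y)) (Set.Ici 0) := by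
    apply strictMonoOn_of_deriv_pos (convex_Ici 0)
    · fun_prop
    · intro y hy
      rw [interior_Ici, Set.mem_Ioi] at hy
      have hd : HasDerivAt (fun y : ℝ => 2 + y - Real.exp y * (2 - y))
          (1 - (Real.exp y * (2 - y) + Real.exp y * (0 - 1))) y := by
        have h1 : HasDerivAt (fun y : ℝ => Real.exp y * (2 - y))
            (Real.exp y * (2 - y) + Real.exp y * (0 - 1)) y :=
          (Real.hasDerivAt_exp y).mul ((hasDerivAt_const y (2:ℝ)).sub (hasDerivAt_id y))
        exact (((hasDerivAt_const y (2:ℝ)).add (hasDerivAt_id' y)).sub h1).congr_deriv (by ring)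
      rw [hd.deriv]
      have h2 : -y + 1 < Real.exp (-y) := Real.add_one_lt_exp (by linarith)
      have h3 : Real.exp y * (1 - y) < Real.exp y * Real.exp (-y) :=
        mul_lt_mul_of_pos_left (by linarith) (Real.exp_pos y)
      rw [← Real.exp_add] at h3
      simp only [add_neg_cancel, Real.exp_zero] at h3
      nlinarith [Real.exp_pos y]
  have h0 : (0:ℝ) ∈ Set.Ici (0:ℝ) := Set.self_mem_Ici
  have := key h0 (Set.mem_Ici.mpr hs.le) hs
  simp only [Real.exp_zero] at this
  nlinarith

set_option maxHeartbeats 1000000 in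
theorem stmt_10 (q : ℕ) (hq : 2 ≤ q) :
    let f : ℝ → ℝ := fun x =>
      -(q:ℝ) * (Real.exp (-x/((q:ℝ)-1)) - 1) / (((q:ℝ)-1) * Real.exp (-x/((q:ℝ)-1)) + 1)
    let g : ℝ → ℝ := fun x =>
      (q:ℝ) * ((q:ℝ)-1) * (Real.exp x - 1) / (((q:ℝ)-1) * Real.exp x + 1)
    ∀ x : ℝ, 0 < x → (g ∘ f) x < x := by
  intro f g x hx
  have hQ : (2:ℝ) ≤ (q:ℝ) := by exact_mod_cast hq
  have hQ0 : (0:ℝ) < (q:ℝ) := by linarith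
  have hQ1 : (0:ℝ) < (q:ℝ) - 1 := by linarith
  have ht : 0 < x / ((q:ℝ)-1) := div_pos hx hQ1
  set t : ℝ := x / ((q:ℝ)-1) with htdef
  have hxt : x = ((q:ℝ)-1) * t := by rw [htdef]; field_simp
  have hu0 : 0 < Real.exp (-t) := Real.exp_pos _
  set u : ℝ := Real.exp (-t) with hudef
  have hu1 : u < 1 := by
    rw [hudef, show (1:ℝ) = Real.exp 0 by simp]
    exact Real.exp_lt_exp.mpr (by linarith)
  have hD : 0 < ((q:ℝ)-1) * u + 1 := by nlinarith
  have harg : -x / ((q:ℝ)-1) = -t := by rw [neg_div, htdef]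
  have hfx : f x = -(q:ℝ) * (u - 1) / (((q:ℝ)-1) * u + 1) := by
    show -(q:ℝ) * (Real.exp (-x/((q:ℝ)-1)) - 1) / (((q:ℝ)-1) * Real.exp (-x/((q:ℝ)-1)) + 1) = _
    rw [harg, ← hudef]
  have hgoal : (g ∘ f) x
      = (q:ℝ) * ((q:ℝ)-1) * (Real.exp (f x) - 1) / (((q:ℝ)-1) * Real.exp (f x) + 1) := rfl
  rw [hgoal, hfx]
  set s : ℝ := -(q:ℝ) * (u - 1) / (((q:ℝ)-1) * u + 1) with hsdef
  have hsD : s * (((q:ℝ)-1) * u + 1) = (q:ℝ) * (1 - u) := by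
    rw [hsdef]; field_simp; ring
  have hs0 : 0 < s := by
    rw [hsdef]; apply div_pos _ hD; nlinarith
  have hE0 : 0 < Real.exp s := Real.exp_pos _
  set E : ℝ := Real.exp s with hEdef
  have hDE : 0 < ((q:ℝ)-1) * E + 1 := by nlinarith
  rw [div_lt_iff₀ hDE]
  rcases lt_or_ge x (q:ℝ) with hxq | hxq
  · -- main case: 0 < x < q
    have hxq' : ((q:ℝ)-1) * t < (q:ℝ) := by rw [← hxt]; exact hxq
    -- Padé lower bound for u = exp(-t)
    have hue : u * Real.exp t = 1 := by
      rw [hudef, ← Real.exp_add]; simp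
    have hpt := pade_aux t ht
    have h1 : 2 - t < u * (2 + t) := by nlinarith [mul_lt_mul_of_pos_left hpt hu0]
    -- M = 2q - (q-2)t > 0
    have hM : 0 < 2*(q:ℝ) - ((q:ℝ)-2)*t := by nlinarith
    -- s * M < 2 q t
    have h3 : (1 - u) * (2*(q:ℝ) - ((q:ℝ)-2)*t) < 2*t*(((q:ℝ)-1) * u + 1) := by
      have hid : (1 - u) * (2*(q:ℝ) - ((q:ℝ)-2)*t) - 2*t*(((q:ℝ)-1) * u + 1)
          = (q:ℝ) * ((2 - t) - u * (2 + t)) := by ring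
      nlinarith
    have h4 : s * (2*(q:ℝ) - ((q:ℝ)-2)*t) < 2*(q:ℝ)*t := by
      have h4a : (s * (2*(q:ℝ) - ((q:ℝ)-2)*t)) * (((q:ℝ)-1) * u + 1)
          < (2*(q:ℝ)*t) * (((q:ℝ)-1) * u + 1) := by
        have heq : (s * (2*(q:ℝ) - ((q:ℝ)-2)*t)) * (((q:ℝ)-1) * u + 1)
            = ((q:ℝ) * (1 - u)) * (2*(q:ℝ) - ((q:ℝ)-2)*t) := by
          calc (s * (2*(q:ℝ) - ((q:ℝ)-2)*t)) * (((q:ℝ)-1) * u + 1)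
              = (s * (((q:ℝ)-1) * u + 1)) * (2*(q:ℝ) - ((q:ℝ)-2)*t) := by ring
            _ = ((q:ℝ) * (1 - u)) * (2*(q:ℝ) - ((q:ℝ)-2)*t) := by rw [hsD]
        have hmul := mul_lt_mul_of_pos_left h3 hQ0
        rw [heq]
        nlinarith [hmul]
      exact lt_of_mul_lt_mul_right h4a hD.le
    have hs2 : s < 2 := by
      have : 2 * (2*(q:ℝ) - ((q:ℝ)-2)*t) - 2*(q:ℝ)*t = 4*(q:ℝ) - 4*(((q:ℝ)-1)*t) := by ring
      nlinarith
    -- Padé upper bound for exp s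
    have h5 := pade_aux s hs0
    have hN : 0 < (q:ℝ) - ((q:ℝ)-1)*t := by linarith
    have h7 : (2 + s) * ((q:ℝ) - ((q:ℝ)-1)*t) < (2 - s) * ((q:ℝ) + t) := by
      have hid : (2 - s) * ((q:ℝ) + t) - (2 + s) * ((q:ℝ) - ((q:ℝ)-1)*t)
          = 2*(q:ℝ)*t - s * (2*(q:ℝ) - ((q:ℝ)-2)*t) := by ring
      linarith
    have h8 : (E * (2 - s)) * ((q:ℝ) - ((q:ℝ)-1)*t)
        < (2 + s) * ((q:ℝ) - ((q:ℝ)-1)*t) := mul_lt_mul_of_pos_right h5 hN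
    have h9 : (E * ((q:ℝ) - ((q:ℝ)-1)*t)) * (2 - s) < (((q:ℝ) + t)) * (2 - s) := by
      nlinarith
    have h6 : E * ((q:ℝ) - ((q:ℝ)-1)*t) < (q:ℝ) + t :=
      lt_of_mul_lt_mul_right h9 (by linarith)
    have hfin : x * (((q:ℝ)-1)*E + 1) - (q:ℝ) * ((q:ℝ)-1) * (E - 1)
        = ((q:ℝ)-1) * (((q:ℝ) + t) - E * ((q:ℝ) - ((q:ℝ)-1)*t)) := by
      rw [hxt]; ring
    linarith [mul_pos hQ1 (show (0:ℝ) < ((q:ℝ) + t) - E * ((q:ℝ) - ((q:ℝ)-1)*t) by linarith)]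
  · -- easy case: x ≥ q, since g < q always
    nlinarith [mul_le_mul_of_nonneg_right hxq hDE.le]
end

section
/- For every integer q ≥ 2, the Taylor expansion of φ = g ∘ f at 0, where f(x) = -q(e^{-x/(q-1)} - 1)/((q-1)e^{-x/(q-1)} + 1) and g(x) = q(q-1)(e^x - 1)/((q-1)e^x + 1), is φ(x) = x - x³/(6(q-1)²) + O(x⁴). Consequently there exist constants A > 0 and c₀ > 0 such that x - φ(x) ≥ A x³ for all 0 ≤ x ≤ c₀. -/
open Asymptotics Filter

noncomputable def Sp (y : ℝ) : ℝ := 1 + y + y^2/2 + y^3/6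
noncomputable def Pf (a x : ℝ) : ℝ :=
  x/a + (a-1)/(2*(a+1)*a^2) * x^2 + (a^2-4*a+1)/(6*(a+1)^2*a^3) * x^3
noncomputable def Pg (a y : ℝ) : ℝ :=
  a*y - a*(a-1)/(2*(a+1)) * y^2 + a*(a^2-4*a+1)/(6*(a+1)^2) * y^3
noncomputable def Kf (a x : ℝ) : ℝ :=
  (7-4*a+a^2)/(12*a^3*(a+1)^2) + (-1+2*a)/(6*a^4*(a+1)^2) * x
    + (1-4*a+a^2)/(36*a^5*(a+1)^2) * x^2
noncomputable def Kg (a y : ℝ) : ℝ :=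
  a^2*(-7+4*a-a^2)/(12*(a+1)^2) + a^2*(-1+2*a)/(6*(a+1)^2) * y
    + a^2*(-1+4*a-a^2)/(36*(a+1)^2) * y^2
noncomputable def Mm (a x : ℝ) : ℝ :=
  (1-a)/(24*a^3*(a+1))
  + (3-22*a+46*a^2-22*a^3+3*a^4)/(24*a^4*(a+1)^4) * x
  + (-13+111*a-308*a^2+308*a^3-111*a^4+13*a^5)/(144*a^5*(a+1)^5) * x^2
  + (5-54*a+207*a^2-332*a^3+207*a^4-54*a^5+5*a^6)/(144*a^6*(a+1)^6) * x^3
  + (-1+13*a-63*a^2+139*a^3-139*a^4+63*a^5-13*a^6+a^7)/(144*a^7*(a+1)^7) * x^4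
  + (1-16*a+100*a^2-304*a^3+454*a^4-304*a^5+100*a^6-16*a^7+a^8)/(1296*a^8*(a+1)^8) * x^5

lemma hkf_id (a : ℝ) (ha : a ≠ 0) (ha1 : a + 1 ≠ 0) (x : ℝ) :
    (a+1)*(1 - Sp (-x/a)) - Pf a x * (a * Sp (-x/a) + 1) = x^4 * Kf a x := by
  unfold Sp Pf Kf; field_simp; ring

lemma hkg_id (a : ℝ) (ha1 : a + 1 ≠ 0) (y : ℝ) :
    (a+1)*a*(Sp y - 1) - Pg a y * (a * Sp y + 1) = y^4 * Kg a y := by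
  unfold Sp Pg Kg; field_simp; ring

lemma hm_id (a : ℝ) (ha : a ≠ 0) (ha1 : a + 1 ≠ 0) (x : ℝ) :
    Pg a (Pf a x) - (x - x^3/(6*a^2)) = x^4 * Mm a x := by
  unfold Pf Pg Mm; field_simp; ring

lemma expO : (fun y : ℝ => Real.exp y - Sp y) =O[nhds 0] (fun y => y^4) := by
  rw [isBigO_iff]
  refine ⟨1, ?_⟩
  have h1 : ∀ᶠ y : ℝ in nhds 0, |y| ≤ 1 := by
    filter_upwards [Metric.ball_mem_nhds (0:ℝ) one_pos] with y hy
    rw [Metric.mem_ball, Real.dist_eq, sub_zero] at hy; exact hy.le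
  filter_upwards [h1] with y hy
  have hb := Real.exp_bound hy (n := 4) (by norm_num)
  have hsum : ∑ m ∈ Finset.range 4, y ^ m / (m.factorial : ℝ) = Sp y := by
    simp [Finset.sum_range_succ, Sp, Nat.factorial]
  rw [hsum] at hb
  have h2 : ‖Real.exp y - Sp y‖ ≤ |y|^4 * ((4+1) / (24 * 4)) := by
    convert hb using 3 <;> norm_num [Nat.factorial]
  calc ‖Real.exp y - Sp y‖ ≤ |y|^4 * ((4+1) / (24 * 4)) := h2
    _ ≤ |y|^4 := by nlinarith [abs_nonneg y, pow_nonneg (abs_nonneg y) 4]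
    _ = ‖y^4‖ := by rw [Real.norm_eq_abs, abs_pow]
    _ = 1 * ‖y^4‖ := (one_mul _).symm

lemma x4_le_x : (fun x : ℝ => x^4) =O[nhds 0] (fun x : ℝ => x) := by
  rw [isBigO_iff]
  refine ⟨1, ?_⟩
  filter_upwards [Metric.ball_mem_nhds (0:ℝ) one_pos] with y hy
  rw [Metric.mem_ball, Real.dist_eq, sub_zero] at hy
  rw [Real.norm_eq_abs, Real.norm_eq_abs, abs_pow, one_mul]
  calc |y|^4 ≤ |y|^1 := pow_le_pow_of_le_one (abs_nonneg y) hy.le (by norm_num)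
    _ = |y| := pow_one _

theorem stmt_12 (q : ℕ) (hq : 2 ≤ q) :
    let f : ℝ → ℝ := fun x =>
      -(q:ℝ) * (Real.exp (-x/((q:ℝ)-1)) - 1) / (((q:ℝ)-1) * Real.exp (-x/((q:ℝ)-1)) + 1)
    let g : ℝ → ℝ := fun x =>
      (q:ℝ) * ((q:ℝ)-1) * (Real.exp x - 1) / (((q:ℝ)-1) * Real.exp x + 1)
    let φ : ℝ → ℝ := g ∘ f
    (fun x : ℝ => φ x - (x - x^3 / (6 * ((q:ℝ)-1)^2))) =O[nhds 0] (fun x : ℝ => x^4) ∧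
    ∃ A : ℝ, 0 < A ∧ ∃ c₀ : ℝ, 0 < c₀ ∧
      ∀ x : ℝ, 0 ≤ x → x ≤ c₀ → A * x^3 ≤ x - φ x := by
  intro f g φ
  have hq2 : (2:ℝ) ≤ (q:ℝ) := by exact_mod_cast hq
  set a : ℝ := (q:ℝ) - 1 with ha_def
  have ha1 : 1 ≤ a := by rw [ha_def]; linarith
  have ha0 : (0:ℝ) < a := lt_of_lt_of_le one_pos ha1
  have hane : a ≠ 0 := ne_of_gt ha0
  have haq : a + 1 ≠ 0 := by positivity
  have hqa : (q:ℝ) = a + 1 := by rw [ha_def]; ring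
  -- rewritten forms of f and g
  have hf_def : ∀ x, f x = (a+1) * (1 - Real.exp (-x/a)) / (a * Real.exp (-x/a) + 1) := by
    intro x
    show -(q:ℝ) * (Real.exp (-x/a) - 1) / (a * Real.exp (-x/a) + 1) = _
    rw [hqa]; ring
  have hg_def : ∀ y, g y = (a+1) * a * (Real.exp y - 1) / (a * Real.exp y + 1) := by
    intro y
    show (q:ℝ) * a * (Real.exp y - 1) / (a * Real.exp y + 1) = _
    rw [hqa]
  have hφ_def : ∀ x, φ x = g (f x) := fun _ => rfl
  -- denominators
  have hDf : ∀ x : ℝ, 1 ≤ a * Real.exp (-x/a) + 1 := by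
    intro x; nlinarith [Real.exp_pos (-x/a)]
  have hDg : ∀ y : ℝ, 1 ≤ a * Real.exp y + 1 := by
    intro y; nlinarith [Real.exp_pos y]
  have hDf0 : ∀ x : ℝ, a * Real.exp (-x/a) + 1 ≠ 0 :=
    fun x => ne_of_gt (lt_of_lt_of_le one_pos (hDf x))
  have hDg0 : ∀ y : ℝ, a * Real.exp y + 1 ≠ 0 :=
    fun y => ne_of_gt (lt_of_lt_of_le one_pos (hDg y))
  -- continuity facts
  have hPfc : Continuous (Pf a) := by unfold Pf; fun_prop
  have hPgc : Continuous (Pg a) := by unfold Pg; fun_prop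
  have hKfc : Continuous (Kf a) := by unfold Kf; fun_prop
  have hKgc : Continuous (Kg a) := by unfold Kg; fun_prop
  have hMmc : Continuous (Mm a) := by unfold Mm; fun_prop
  have hfc : Continuous f := by
    have h : Continuous fun x : ℝ =>
        (a+1) * (1 - Real.exp (-x/a)) / (a * Real.exp (-x/a) + 1) := by
      apply Continuous.div (by fun_prop) (by fun_prop)
      exact hDf0
    exact h.congr fun x => (hf_def x).symm
  -- exp remainder big-O after substitution
  have hEO : (fun x : ℝ => Real.exp (-x/a) - Sp (-x/a)) =O[nhds 0] fun x => x^4 := by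
    have t : Tendsto (fun x : ℝ => -x/a) (nhds 0) (nhds 0) := by
      have h : Continuous fun x : ℝ => -x/a := by fun_prop
      simpa using h.tendsto 0
    have h1 := expO.comp_tendsto t
    simp only [Function.comp_def] at h1
    refine h1.trans ?_
    have he : (fun x : ℝ => (-x/a)^4) = fun x : ℝ => (1/a^4) * x^4 := by
      funext x; field_simp
    rw [he]
    exact isBigO_const_mul_self _ _ _
  -- inverse denominators are O(1)
  have hIDf : (fun x : ℝ => (a * Real.exp (-x/a) + 1)⁻¹) =O[nhds 0] fun _ => (1:ℝ) := by
    rw [isBigO_iff]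
    refine ⟨1, Eventually.of_forall fun x => ?_⟩
    rw [Real.norm_eq_abs, abs_inv, abs_of_pos (lt_of_lt_of_le one_pos (hDf x))]
    simp only [norm_one, one_mul]
    exact inv_le_one_of_one_le₀ (hDf x)
  have hIDg : (fun y : ℝ => (a * Real.exp y + 1)⁻¹) =O[nhds 0] fun _ => (1:ℝ) := by
    rw [isBigO_iff]
    refine ⟨1, Eventually.of_forall fun y => ?_⟩
    rw [Real.norm_eq_abs, abs_inv, abs_of_pos (lt_of_lt_of_le one_pos (hDg y))]
    simp only [norm_one, one_mul]
    exact inv_le_one_of_one_le₀ (hDg y)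
  -- f - Pf = O(x^4)
  have hfPf : (fun x => f x - Pf a x) =O[nhds 0] fun x : ℝ => x^4 := by
    have key : ∀ x, f x - Pf a x =
        (x^4 * Kf a x - ((a+1) + a * Pf a x) * (Real.exp (-x/a) - Sp (-x/a))) *
          (a * Real.exp (-x/a) + 1)⁻¹ := by
      intro x
      rw [hf_def x, ← hkf_id a hane haq x]
      field_simp
      ring
    have b1 : (fun x : ℝ => x^4 * Kf a x) =O[nhds 0] fun x : ℝ => x^4 := by
      simpa only [mul_one] using
        (isBigO_refl (fun x : ℝ => x^4) (nhds 0)).mul ((hKfc.tendsto 0).isBigO_one ℝ)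
    have b2 : (fun x : ℝ => ((a+1) + a * Pf a x) * (Real.exp (-x/a) - Sp (-x/a)))
        =O[nhds 0] fun x : ℝ => x^4 := by
      have hc : Continuous fun x : ℝ => (a+1) + a * Pf a x := by fun_prop
      simpa only [one_mul] using ((hc.tendsto 0).isBigO_one ℝ).mul hEO
    have hmain := (b1.sub b2).mul hIDf
    simp only [mul_one] at hmain
    exact hmain.congr' (Eventually.of_forall fun x => (key x).symm) EventuallyEq.rfl
  -- g - Pg = O(y^4)
  have hgPg : (fun y => g y - Pg a y) =O[nhds 0] fun y : ℝ => y^4 := by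
    have key : ∀ y, g y - Pg a y =
        (y^4 * Kg a y + ((a+1)*a - a * Pg a y) * (Real.exp y - Sp y)) *
          (a * Real.exp y + 1)⁻¹ := by
      intro y
      rw [hg_def y, ← hkg_id a haq y]
      field_simp
      ring
    have b1 : (fun y : ℝ => y^4 * Kg a y) =O[nhds 0] fun y : ℝ => y^4 := by
      simpa only [mul_one] using
        (isBigO_refl (fun y : ℝ => y^4) (nhds 0)).mul ((hKgc.tendsto 0).isBigO_one ℝ)
    have b2 : (fun y : ℝ => ((a+1)*a - a * Pg a y) * (Real.exp y - Sp y))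
        =O[nhds 0] fun y : ℝ => y^4 := by
      have hc : Continuous fun y : ℝ => (a+1)*a - a * Pg a y := by fun_prop
      simpa only [one_mul] using ((hc.tendsto 0).isBigO_one ℝ).mul expO
    have hmain := (b1.add b2).mul hIDg
    simp only [mul_one] at hmain
    exact hmain.congr' (Eventually.of_forall fun y => (key y).symm) EventuallyEq.rfl
  -- Pf = O(x), f = O(x)
  have hPfO : (fun x => Pf a x) =O[nhds 0] fun x : ℝ => x := by
    have key : ∀ x : ℝ, Pf a x =
        x * (1/a + (a-1)/(2*(a+1)*a^2) * x + (a^2-4*a+1)/(6*(a+1)^2*a^3) * x^2) := by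
      intro x; unfold Pf; ring
    have hc : Continuous fun x : ℝ =>
        1/a + (a-1)/(2*(a+1)*a^2) * x + (a^2-4*a+1)/(6*(a+1)^2*a^3) * x^2 := by fun_prop
    have hmain := (isBigO_refl (fun x : ℝ => x) (nhds 0)).mul ((hc.tendsto 0).isBigO_one ℝ)
    simp only [mul_one] at hmain
    exact hmain.congr' (Eventually.of_forall fun x => (key x).symm) EventuallyEq.rfl
  have hfO : f =O[nhds 0] fun x : ℝ => x := by
    have h := (hfPf.trans x4_le_x).add hPfO
    simpa only [sub_add_cancel] using h
  have hf0 : Tendsto f (nhds 0) (nhds 0) := hfO.trans_tendsto tendsto_id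
  -- Term 1
  have T1 : (fun x => g (f x) - Pg a (f x)) =O[nhds 0] fun x : ℝ => x^4 := by
    have c1 := hgPg.comp_tendsto hf0
    simp only [Function.comp_def] at c1
    refine c1.trans ?_
    simpa using hfO.pow 4
  -- Term 2
  have T2 : (fun x => Pg a (f x) - Pg a (Pf a x)) =O[nhds 0] fun x : ℝ => x^4 := by
    have key : ∀ x, Pg a (f x) - Pg a (Pf a x) =
        (f x - Pf a x) *
          (a - a*(a-1)/(2*(a+1)) * (f x + Pf a x)
            + a*(a^2-4*a+1)/(6*(a+1)^2) * ((f x)^2 + f x * Pf a x + (Pf a x)^2)) := by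
      intro x; unfold Pg; ring
    have hc : Continuous fun x : ℝ =>
        a - a*(a-1)/(2*(a+1)) * (f x + Pf a x)
          + a*(a^2-4*a+1)/(6*(a+1)^2) * ((f x)^2 + f x * Pf a x + (Pf a x)^2) := by
      apply Continuous.add
      · exact continuous_const.sub (continuous_const.mul (hfc.add hPfc))
      · exact continuous_const.mul (((hfc.pow 2).add (hfc.mul hPfc)).add (hPfc.pow 2))
    have hmain := hfPf.mul ((hc.tendsto 0).isBigO_one ℝ)
    simp only [mul_one] at hmain
    exact hmain.congr' (Eventually.of_forall fun x => (key x).symm) EventuallyEq.rfl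
  -- Term 3
  have T3 : (fun x : ℝ => Pg a (Pf a x) - (x - x^3/(6*a^2))) =O[nhds 0] fun x : ℝ => x^4 := by
    have b1 : (fun x : ℝ => x^4 * Mm a x) =O[nhds 0] fun x : ℝ => x^4 := by
      simpa only [mul_one] using
        (isBigO_refl (fun x : ℝ => x^4) (nhds 0)).mul ((hMmc.tendsto 0).isBigO_one ℝ)
    exact b1.congr' (Eventually.of_forall fun x => (hm_id a hane haq x).symm) EventuallyEq.rfl
  -- main big-O statement
  have key : (fun x : ℝ => φ x - (x - x^3 / (6 * a^2))) =O[nhds 0] fun x : ℝ => x^4 := by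
    have hsum := (T1.add T2).add T3
    refine hsum.congr' (Eventually.of_forall fun x => ?_) EventuallyEq.rfl
    show g (f x) - Pg a (f x) + (Pg a (f x) - Pg a (Pf a x))
        + (Pg a (Pf a x) - (x - x ^ 3 / (6 * a ^ 2))) = φ x - (x - x ^ 3 / (6 * a ^ 2))
    rw [hφ_def x]; ring
  refine ⟨key, ?_⟩
  -- second part
  obtain ⟨C, hC⟩ := isBigO_iff.mp key
  rw [Metric.eventually_nhds_iff] at hC
  obtain ⟨δ, hδ, hCb⟩ := hC
  refine ⟨1/(12*a^2), by positivity, min (δ/2) (1/(12*a^2*(|C|+1))), ?_, ?_⟩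
  · have : (0:ℝ) < |C| + 1 := by positivity
    apply lt_min (by positivity) (by positivity)
  · intro x hx0 hxc
    have hx1 : x ≤ δ/2 := le_trans hxc (min_le_left _ _)
    have hx2 : x ≤ 1/(12*a^2*(|C|+1)) := le_trans hxc (min_le_right _ _)
    have hd : dist x 0 < δ := by
      rw [Real.dist_eq, sub_zero, abs_of_nonneg hx0]; linarith
    have hb := hCb hd
    rw [Real.norm_eq_abs, Real.norm_eq_abs] at hb
    have hb2 : |φ x - (x - x^3 / (6 * a^2))| ≤ |C| * x^4 := by
      calc |φ x - (x - x^3 / (6 * a^2))| ≤ C * |x^4| := hb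
        _ ≤ |C| * x^4 := by
            rw [abs_pow, abs_of_nonneg hx0]
            exact mul_le_mul_of_nonneg_right (le_abs_self C) (by positivity)
    have hb3 : φ x - (x - x^3 / (6 * a^2)) ≤ |C| * x^4 := le_trans (le_abs_self _) hb2
    have hCx : |C| * x ≤ 1/(12*a^2) := by
      have h1 : (|C|+1) * x ≤ (|C|+1) * (1/(12*a^2*(|C|+1))) :=
        mul_le_mul_of_nonneg_left hx2 (by positivity)
      have h2 : (|C|+1) * (1/(12*a^2*(|C|+1))) = 1/(12*a^2) := by
        field_simp
      nlinarith [abs_nonneg C]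
    have hx3 : (0:ℝ) ≤ x^3 := by positivity
    have h4 : |C| * x^4 ≤ x^3 / (12*a^2) := by
      have : |C| * x^4 = (|C| * x) * x^3 := by ring
      rw [this]
      calc (|C| * x) * x^3 ≤ (1/(12*a^2)) * x^3 := mul_le_mul_of_nonneg_right hCx hx3
        _ = x^3 / (12*a^2) := by ring
    have e1 : x^3/(6*a^2) = 2 * (1/(12*a^2) * x^3) := by
      field_simp; ring
    have e2 : x^3/(12*a^2) = 1/(12*a^2) * x^3 := by ring
    linarith [hb3, h4]
end

section
/- For real numbers C1, C2 with 0 ≤ C1 < C2 and any real l ≥ 1, define u1 = 2 + l + C2 - 2C1 + l·C1·C2 - l·C1² and u2 = -(2 + l + l·C1 - (l+1)·C2 + C1·C2 - C2²). Then u1·e^{C1} + u2·e^{C2} > 0. -/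
theorem stmt_15 (C1 C2 l : ℝ) (h1 : 0 ≤ C1) (h2 : C1 < C2) (hl : 1 ≤ l) :
    let u1 : ℝ := 2 + l + C2 - 2*C1 + l*C1*C2 - l*C1^2
    let u2 : ℝ := -(2 + l + l*C1 - (l+1)*C2 + C1*C2 - C2^2)
    0 < u1 * Real.exp C1 + u2 * Real.exp C2 := by
  intro u1 u2
  have hep1 : (0:ℝ) < Real.exp C1 := Real.exp_pos _
  have hep2 : (0:ℝ) < Real.exp C2 := Real.exp_pos _
  have hlt : Real.exp C1 < Real.exp C2 := Real.exp_lt_exp.2 h2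
  have hl0 : (0:ℝ) ≤ l := le_trans zero_le_one hl
  have hsum : 0 < u1 + u2 := by
    have e : u1 + u2 = (C2 - C1) * (l + 2 + C2 + l*C1) := by simp only [u1, u2]; ring
    rw [e]
    have hc : 0 < C2 - C1 := by linarith
    have : 0 < l + 2 + C2 + l*C1 := by nlinarith [mul_nonneg hl0 h1]
    exact mul_pos hc this
  rcases le_or_gt 0 u2 with hu2 | hu2
  · nlinarith [mul_le_mul_of_nonneg_left hlt.le hu2]
  · -- u2 < 0
    have hu2' : 0 < 2 + l + l*C1 - (l+1)*C2 + C1*C2 - C2^2 := by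
      simp only [u2] at hu2; linarith
    have hd : C2 - C1 < 1 := by nlinarith
    have hu1 : 0 < u1 := by
      have := hsum; simp only [u1, u2] at this ⊢; linarith
    have hexp : (1 + C1 - C2) * Real.exp C2 < Real.exp C1 := by
      have h := Real.add_one_lt_exp (x := C1 - C2) (by intro h; apply absurd h; linarith)
      have h2' : (C1 - C2 + 1) * Real.exp C2 < Real.exp (C1 - C2) * Real.exp C2 :=
        mul_lt_mul_of_pos_right h hep2
      rwa [← Real.exp_add, sub_add_cancel, show C1 - C2 + 1 = 1 + C1 - C2 by ring] at h2'
    have hkey : 0 ≤ (1 + C1 - C2) * u1 + u2 := by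
      have e : (1 + C1 - C2) * u1 + u2 = (C2 - C1) * (C1 * (l + 2 - l*(C2 - C1))) := by
        simp only [u1, u2]; ring
      rw [e]
      apply mul_nonneg (by linarith)
      apply mul_nonneg h1
      nlinarith
    have h3 : u1 * ((1 + C1 - C2) * Real.exp C2) < u1 * Real.exp C1 :=
      mul_lt_mul_of_pos_left hexp hu1
    have h4 : 0 ≤ ((1 + C1 - C2) * u1 + u2) * Real.exp C2 := mul_nonneg hkey hep2.le
    nlinarith
end

section
/- For real numbers 0 ≤ C1 < C2 ≤ C3, the quantity s = (1 + C3 - C1)·e^{C1} - (1 + C3 - C2)·e^{C2} + (C2 - C1)·C3·e^{C3} is strictly positive. -/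
theorem stmt_16 (C1 C2 C3 : ℝ) (h1 : 0 ≤ C1) (h12 : C1 < C2) (h23 : C2 ≤ C3) :
    0 < (1 + C3 - C1) * Real.exp C1 - (1 + C3 - C2) * Real.exp C2 +
        (C2 - C1) * C3 * Real.exp C3 := by
  have hy : 0 < Real.exp C2 := Real.exp_pos _
  have h1' : (1 + (C1 - C2)) * Real.exp C2 < Real.exp C1 := by
    have := Real.add_one_lt_exp (x := C1 - C2) (by linarith)
    calc (1 + (C1 - C2)) * Real.exp C2 < Real.exp (C1 - C2) * Real.exp C2 := by nlinarith
    _ = Real.exp C1 := by rw [← Real.exp_add]; ring_nf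
  have h2' : (1 + (C3 - C2)) * Real.exp C2 ≤ Real.exp C3 := by
    have := Real.add_one_le_exp (C3 - C2)
    calc (1 + (C3 - C2)) * Real.exp C2 ≤ Real.exp (C3 - C2) * Real.exp C2 := by nlinarith
    _ = Real.exp C3 := by rw [← Real.exp_add]; ring_nf
  nlinarith [mul_nonneg (mul_nonneg (sub_nonneg.2 h12.le) (by nlinarith : (0:ℝ) ≤ C1 + C3*(C3-C2))) hy.le, mul_nonneg (mul_nonneg (sub_nonneg.2 h12.le) (by linarith : (0:ℝ) ≤ C3)) (sub_nonneg.2 h2'), mul_pos (by linarith : (0:ℝ) < 1 + C3 - C1) (sub_pos.2 h1'), Real.exp_pos C3]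
end

section
/- Fix reals y_1, …, y_{q-1} ≥ 0 with Σ y_j + 1 > 0, indices i, i+1 ≤ q-1, and for t ∈ [0, y_i - y_{i+1}] (assuming y_i ≥ y_{i+1}) define G_i(t) = q(1 - (y_i - t))/(1 + Σ_j y_j) and G_{i+1}(t) = q(1 - (y_{i+1} + t))/(1 + Σ_j y_j), and g(t) = e^{G_i(t)}(1 - y_i + t) + e^{G_{i+1}(t)}(1 - y_{i+1} - t). Then g is convex on [0, y_i - y_{i+1}], satisfies g(t) = g(y_i - y_{i+1} - t), and attains its minimum on this interval uniquely at t = (y_i - y_{i+1})/2, provided y_i, y_{i+1} ≤ 1 (so the second derivative is strictly positive). -/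
lemma stmt17_d1 (c A t : ℝ) :
    HasDerivAt (fun t => Real.exp (c*(A+t)) * (A+t))
      (Real.exp (c*(A+t)) * (c*(A+t)+1)) t := by
  have h1 : HasDerivAt (fun t : ℝ => c*(A+t)) c t := by
    simpa using ((hasDerivAt_id t).const_add A).const_mul c
  have h2 : HasDerivAt (fun t : ℝ => A+t) 1 t := (hasDerivAt_id t).const_add A
  have := h1.exp.fun_mul h2
  refine this.congr_deriv ?_
  ring

lemma stmt17_d1' (c A t : ℝ) :
    HasDerivAt (fun t => Real.exp (c*(A-t)) * (A-t))
      (-(Real.exp (c*(A-t)) * (c*(A-t)+1))) t := by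
  have h1 : HasDerivAt (fun t : ℝ => c*(A-t)) (-c) t := by
    simpa using ((hasDerivAt_id t).const_sub A).const_mul c
  have h2 : HasDerivAt (fun t : ℝ => A-t) (-1) t := (hasDerivAt_id t).const_sub A
  have := h1.exp.fun_mul h2
  refine this.congr_deriv ?_
  ring

lemma stmt17_d2 (c A t : ℝ) :
    HasDerivAt (fun t => Real.exp (c*(A+t)) * (c*(A+t)+1))
      (c * (Real.exp (c*(A+t)) * (c*(A+t)+2))) t := by
  have h1 : HasDerivAt (fun t : ℝ => c*(A+t)) c t := by
    simpa using ((hasDerivAt_id t).const_add A).const_mul c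
  have := h1.exp.fun_mul (h1.add_const 1)
  refine this.congr_deriv ?_
  ring

lemma stmt17_d2' (c A t : ℝ) :
    HasDerivAt (fun t => -(Real.exp (c*(A-t)) * (c*(A-t)+1)))
      (c * (Real.exp (c*(A-t)) * (c*(A-t)+2))) t := by
  have h1 : HasDerivAt (fun t : ℝ => c*(A-t)) (-c) t := by
    simpa using ((hasDerivAt_id t).const_sub A).const_mul c
  have := (h1.exp.fun_mul (h1.add_const 1)).fun_neg
  refine this.congr_deriv ?_
  ring

theorem stmt_17 (q : ℕ) (hq : 3 ≤ q) (y : Fin (q-1) → ℝ) (hy : ∀ j, 0 ≤ y j)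
    (hS : 0 < ∑ j, y j + 1)
    (i : ℕ) (hi : i + 1 < q - 1)
    (ha1 : y ⟨i, by omega⟩ ≤ 1) (hb1 : y ⟨i+1, hi⟩ ≤ 1)
    (hab : y ⟨i+1, hi⟩ ≤ y ⟨i, by omega⟩) :
    let S : ℝ := ∑ j, y j
    let a : ℝ := y ⟨i, by omega⟩
    let b : ℝ := y ⟨i+1, hi⟩
    let g : ℝ → ℝ := fun t =>
      Real.exp ((q:ℝ) * (1 - (a - t)) / (1 + S)) * (1 - a + t) +
      Real.exp ((q:ℝ) * (1 - (b + t)) / (1 + S)) * (1 - b - t)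
    ConvexOn ℝ (Set.Icc 0 (a - b)) g ∧
    (∀ t : ℝ, g t = g (a - b - t)) ∧
    (∀ t ∈ Set.Icc (0:ℝ) (a - b), t ≠ (a - b)/2 → g ((a - b)/2) < g t) := by
  intro S a b g
  have hS' : (0:ℝ) < 1 + S := by simpa [add_comm] using hS
  set c : ℝ := (q:ℝ) / (1 + S) with hc
  have hcpos : 0 < c := by
    apply div_pos _ hS'
    exact_mod_cast Nat.lt_of_lt_of_le (by norm_num) hq
  have hgeq : g = fun t => Real.exp (c*((1-a)+t)) * ((1-a)+t)
      + Real.exp (c*((1-b)-t)) * ((1-b)-t) := by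
    funext t
    show Real.exp ((q:ℝ) * (1 - (a - t)) / (1 + S)) * (1 - a + t) +
      Real.exp ((q:ℝ) * (1 - (b + t)) / (1 + S)) * (1 - b - t) = _
    rw [show (q:ℝ) * (1 - (a - t)) / (1 + S) = c*((1-a)+t) by rw [hc]; ring,
        show (q:ℝ) * (1 - (b + t)) / (1 + S) = c*((1-b)-t) by rw [hc]; ring]
  -- first derivative
  have hg' : ∀ t : ℝ, HasDerivAt g
      (Real.exp (c*((1-a)+t)) * (c*((1-a)+t)+1)
        + -(Real.exp (c*((1-b)-t)) * (c*((1-b)-t)+1))) t := by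
    intro t
    rw [hgeq]
    exact (stmt17_d1 c (1-a) t).add (stmt17_d1' c (1-b) t)
  have hgderiv : deriv g = fun t =>
      Real.exp (c*((1-a)+t)) * (c*((1-a)+t)+1)
        + -(Real.exp (c*((1-b)-t)) * (c*((1-b)-t)+1)) := by
    funext t; exact (hg' t).deriv
  have hg'' : ∀ t : ℝ, HasDerivAt (deriv g)
      (c * (Real.exp (c*((1-a)+t)) * (c*((1-a)+t)+2))
        + c * (Real.exp (c*((1-b)-t)) * (c*((1-b)-t)+2))) t := by
    intro t
    rw [hgderiv]
    exact (stmt17_d2 c (1-a) t).add (stmt17_d2' c (1-b) t)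
  have hsym : ∀ t : ℝ, g t = g (a - b - t) := by
    intro t
    rw [hgeq]
    simp only
    rw [show c*((1-a)+(a-b-t)) = c*((1-b)-t) by ring,
        show c*((1-b)-(a-b-t)) = c*((1-a)+t) by ring]
    ring
  have hba : b ≤ a := hab
  have ha1' : a ≤ 1 := ha1
  have hstrict : StrictConvexOn ℝ (Set.Icc 0 (a-b)) g := by
    apply strictConvexOn_of_deriv2_pos (convex_Icc _ _)
    · exact Continuous.continuousOn
        (Differentiable.continuous (fun t => (hg' t).differentiableAt))
    · intro t ht
      rw [interior_Icc, Set.mem_Ioo] at ht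
      have h2 : deriv^[2] g t = c * (Real.exp (c*((1-a)+t)) * (c*((1-a)+t)+2))
          + c * (Real.exp (c*((1-b)-t)) * (c*((1-b)-t)+2)) := by
        rw [show deriv^[2] g = deriv (deriv g) from rfl]
        exact (hg'' t).deriv
      rw [h2]
      have hu : 0 ≤ (1-a)+t := by linarith [ht.1]
      have hv : 0 ≤ (1-b)-t := by linarith [ht.2]
      have e1 := Real.exp_pos (c*((1-a)+t))
      have e2 := Real.exp_pos (c*((1-b)-t))
      have m1 : 0 ≤ c*((1-a)+t) := mul_nonneg hcpos.le hu
      have m2 : 0 ≤ c*((1-b)-t) := mul_nonneg hcpos.le hv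
      positivity
  refine ⟨hstrict.convexOn, hsym, ?_⟩
  intro t ht hne
  have hs : a - b - t ∈ Set.Icc (0:ℝ) (a-b) := by
    constructor <;> [linarith [ht.2]; linarith [ht.1]]
  have hne2 : t ≠ a - b - t := by
    intro h; apply hne; linarith [h]
  have key := hstrict.2 ht hs hne2 (by norm_num : (0:ℝ) < 1/2)
    (by norm_num : (0:ℝ) < 1/2) (by norm_num)
  have hmid : (1/2:ℝ) • t + (1/2:ℝ) • (a - b - t) = (a-b)/2 := by
    simp [smul_eq_mul]; ring
  rw [hmid] at key
  have : g (a - b - t) = g t := by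
    rw [hsym (a-b-t), show a - b - (a-b-t) = t by ring]
  rw [this] at key
  simp only [smul_eq_mul] at key
  linarith [key]
end

section
/- Let q ≥ 3 and let P_c = ∩_{π ∈ S_q} π·H_{≥ -c} where H_{≥ -c} = {x ∈ ℝ^{q-1} : Σ x_i ≥ -c} and S_q acts by the standard representation. Then P_c equals the convex hull of the q points (-c,0,…,0), (0,-c,0,…,0), …, (0,…,0,-c), and (c,c,…,c); moreover P_c = ∪_{π ∈ S_q} π·D_c, where D_c is the convex hull of (-c,0,…,0), …, (0,…,0,-c) and the origin. -/
lemma extZero_castSucc (n : ℕ) (x : Fin n → ℝ) (i : Fin n) :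
    extZero n x i.castSucc = x i := by
  simp [extZero]

lemma extZero_last (n : ℕ) (x : Fin n → ℝ) : extZero n x (Fin.last n) = 0 := by
  simp [extZero]

lemma extZero_stdAct (n : ℕ) (π : Equiv.Perm (Fin (n+1))) (x : Fin n → ℝ) (j : Fin (n+1)) :
    extZero n (stdAct n π x) j
      = extZero n x (π.symm j) - extZero n x (π.symm (Fin.last n)) := by
  induction j using Fin.lastCases with
  | last => rw [extZero_last, sub_self]
  | cast i => rw [extZero_castSucc]; rfl

lemma stdAct_mul (n : ℕ) (π σ : Equiv.Perm (Fin (n+1))) (x : Fin n → ℝ) :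
    stdAct n π (stdAct n σ x) = stdAct n (π * σ) x := by
  funext i
  simp only [stdAct, extZero_stdAct]
  have h : ∀ j : Fin (n+1), (π * σ).symm j = σ.symm (π.symm j) := fun j => rfl
  rw [h, h]
  ring

lemma stdAct_one (n : ℕ) (x : Fin n → ℝ) : stdAct n 1 x = x := by
  funext i
  simp [stdAct, extZero_castSucc, extZero_last, Equiv.Perm.one_symm]

lemma stdAct_image_mem (n : ℕ) (π : Equiv.Perm (Fin (n+1))) (S : Set (Fin n → ℝ))
    (y : Fin n → ℝ) : y ∈ stdAct n π '' S ↔ stdAct n π⁻¹ y ∈ S := by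
  constructor
  · rintro ⟨x, hx, rfl⟩
    rwa [stdAct_mul, inv_mul_cancel, stdAct_one]
  · intro h
    exact ⟨stdAct n π⁻¹ y, h, by rw [stdAct_mul, mul_inv_cancel, stdAct_one]⟩

lemma sum_extZero (n : ℕ) (x : Fin n → ℝ) :
    ∑ j : Fin (n+1), extZero n x j = ∑ i, x i := by
  rw [Fin.sum_univ_castSucc]
  simp [extZero_castSucc, extZero_last]

lemma sum_stdAct (n : ℕ) (π : Equiv.Perm (Fin (n+1))) (x : Fin n → ℝ) :
    ∑ i, stdAct n π x i = (∑ i, x i) - (n+1) * extZero n x (π.symm (Fin.last n)) := by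
  have h1 : ∑ j : Fin (n+1), extZero n x (π.symm j) = ∑ i, x i := by
    rw [Equiv.sum_comp π.symm (extZero n x), sum_extZero]
  have h2 : ∑ i : Fin n, extZero n x (π.symm i.castSucc)
      = (∑ i, x i) - extZero n x (π.symm (Fin.last n)) := by
    rw [← h1, Fin.sum_univ_castSucc]; ring
  simp only [stdAct, Finset.sum_sub_distrib, h2, Finset.sum_const, Finset.card_univ,
    Fintype.card_fin, nsmul_eq_mul]
  push_cast
  ring

lemma symm_inv (n : ℕ) (π : Equiv.Perm (Fin (n+1))) (j : Fin (n+1)) :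
    (π⁻¹).symm j = π j := rfl

/-- Characterization of `P`. -/
lemma P_char (n : ℕ) (c : ℝ) (y : Fin n → ℝ) :
    y ∈ (⋂ π : Equiv.Perm (Fin (n+1)), stdAct n π '' {x | -c ≤ ∑ i, x i})
      ↔ ∀ j : Fin (n+1), -c ≤ (∑ i, y i) - (n+1) * extZero n y j := by
  simp only [Set.mem_iInter, stdAct_image_mem, Set.mem_setOf_eq, sum_stdAct, symm_inv]
  constructor
  · intro h j
    have := h (Equiv.swap (Fin.last n) j)
    rwa [Equiv.swap_apply_left] at this
  · intro h π
    exact h (π (Fin.last n))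

lemma P_char' (n : ℕ) (c : ℝ) (y : Fin n → ℝ) :
    (∀ j : Fin (n+1), -c ≤ (∑ i, y i) - (n+1) * extZero n y j)
      ↔ (-c ≤ ∑ i, y i ∧ ∀ i : Fin n, (n+1) * y i ≤ c + ∑ i, y i) := by
  constructor
  · intro h
    refine ⟨by simpa [extZero_last] using h (Fin.last n), fun i => ?_⟩
    have := h i.castSucc
    rw [extZero_castSucc] at this
    linarith
  · rintro ⟨h1, h2⟩ j
    induction j using Fin.lastCases with
    | last => simpa [extZero_last] using h1
    | cast i =>
      rw [extZero_castSucc]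
      have := h2 i
      linarith

lemma convex_P (n : ℕ) (c : ℝ) :
    Convex ℝ {y : Fin n → ℝ | -c ≤ ∑ i, y i ∧ ∀ i : Fin n, (n+1) * y i ≤ c + ∑ i, y i} := by
  intro x hx y hy a b ha hb hab
  simp only [Set.mem_setOf_eq, Pi.add_apply, Pi.smul_apply, smul_eq_mul,
    Finset.sum_add_distrib, ← Finset.mul_sum] at *
  have hcab : a * c + b * c = c := by rw [← add_mul, hab, one_mul]
  constructor
  · linarith [mul_le_mul_of_nonneg_left hx.1 ha, mul_le_mul_of_nonneg_left hy.1 hb]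
  · intro i
    linarith [mul_le_mul_of_nonneg_left (hx.2 i) ha, mul_le_mul_of_nonneg_left (hy.2 i) hb]

lemma convex_D (n : ℕ) (c : ℝ) :
    Convex ℝ {x : Fin n → ℝ | (∀ i, x i ≤ 0) ∧ -c ≤ ∑ i, x i} := by
  intro x hx y hy a b ha hb hab
  simp only [Set.mem_setOf_eq, Pi.add_apply, Pi.smul_apply, smul_eq_mul,
    Finset.sum_add_distrib, ← Finset.mul_sum] at *
  have hcab : a * c + b * c = c := by rw [← add_mul, hab, one_mul]
  constructor
  · intro i
    nlinarith [mul_le_mul_of_nonneg_left (hx.1 i) ha, mul_le_mul_of_nonneg_left (hy.1 i) hb]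
  · linarith [mul_le_mul_of_nonneg_left hx.2 ha, mul_le_mul_of_nonneg_left hy.2 hb]

lemma nonpos_sum_zero (n : ℕ) (y : Fin n → ℝ) (h : ∀ i, y i ≤ 0)
    (hs : (0:ℝ) ≤ ∑ i, y i) : y = 0 := by
  have hz : ∑ i, y i = 0 :=
    le_antisymm (Finset.sum_nonpos fun i _ => h i) hs
  funext i
  have := (Finset.sum_eq_zero_iff_of_nonpos (fun i _ => h i)).1 hz i (Finset.mem_univ i)
  simpa using this

/-- A convex combination lemma specialized to our setting. -/
lemma mem_hull_of_combo (n : ℕ) (s : Set (Fin n → ℝ)) (w : Fin (n+1) → ℝ)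
    (z : Fin (n+1) → (Fin n → ℝ)) (hw0 : ∀ j, 0 ≤ w j) (hsum : ∑ j, w j = 1)
    (hzs : ∀ j, z j ∈ s) (x : Fin n → ℝ) (hx : ∀ i, x i = ∑ j, w j * z j i) :
    x ∈ convexHull ℝ s := by
  have hx' : x = Finset.univ.centerMass w z := by
    rw [Finset.centerMass_eq_of_sum_1 _ _ hsum]
    funext i
    rw [hx i]
    simp [Finset.sum_apply]
  rw [hx']
  exact Finset.centerMass_mem_convexHull _ (fun j _ => hw0 j) (by rw [hsum]; norm_num)
    (fun j _ => hzs j)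

/-- `D` characterization. -/
lemma D_char (n : ℕ) (c : ℝ) (hc : 0 ≤ c) :
    convexHull ℝ ((Set.range fun k : Fin n => (Pi.single k (-c) : Fin n → ℝ)) ∪ {0})
      = {x : Fin n → ℝ | (∀ i, x i ≤ 0) ∧ -c ≤ ∑ i, x i} := by
  apply Set.Subset.antisymm
  · apply convexHull_min _ (convex_D n c)
    rintro x (⟨k, rfl⟩ | rfl)
    · constructor
      · intro i
        rcases eq_or_ne i k with rfl | hik
        · simp; linarith
        · simp [Pi.single_apply, hik]
      · simp [Pi.single_apply]
    · simp [hc]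
  · rintro x ⟨h1, h2⟩
    rcases eq_or_lt_of_le hc with rfl | hcpos
    · have : x = 0 := nonpos_sum_zero n x h1 (by simpa using h2)
      subst this
      exact subset_convexHull ℝ _ (Or.inr rfl)
    · apply mem_hull_of_combo n _
        (Fin.snoc (fun k => -x k / c) (1 + (∑ i, x i) / c))
        (Fin.snoc (fun k => (Pi.single k (-c) : Fin n → ℝ)) 0)
      · intro j
        induction j using Fin.lastCases with
        | last =>
          rw [Fin.snoc_last]
          have : -1 ≤ (∑ i, x i) / c := by
            rw [le_div_iff₀ hcpos]; linarith
          linarith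
        | cast k =>
          rw [Fin.snoc_castSucc]
          exact div_nonneg (neg_nonneg.2 (h1 k)) hcpos.le
      · rw [Fin.sum_univ_castSucc]
        simp only [Fin.snoc_castSucc, Fin.snoc_last]
        rw [← Finset.sum_div]
        field_simp
        simp only [Finset.sum_neg_distrib]
        ring
      · intro j
        induction j using Fin.lastCases with
        | last => rw [Fin.snoc_last]; exact Or.inr rfl
        | cast k => rw [Fin.snoc_castSucc]; exact Or.inl ⟨k, rfl⟩
      · intro i
        rw [Fin.sum_univ_castSucc]
        simp only [Fin.snoc_castSucc, Fin.snoc_last]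
        rw [Pi.zero_apply, mul_zero, add_zero]
        have hterm : ∀ k : Fin n, -x k / c * (Pi.single k (-c) : Fin n → ℝ) i
            = if i = k then x k else 0 := by
          intro k
          rcases eq_or_ne i k with rfl | hik
          · rw [if_pos rfl, Pi.single_eq_same]; field_simp
          · rw [if_neg hik, Pi.single_eq_of_ne hik, mul_zero]
        simp only [hterm, Finset.sum_ite_eq, Finset.mem_univ, if_pos]
  
/-- hull of verts characterization. -/
lemma hull_char (n : ℕ) (c : ℝ) (hc : 0 ≤ c) :
    convexHull ℝ ((Set.range fun k : Fin n => (Pi.single k (-c) : Fin n → ℝ))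
        ∪ {fun _ => c})
      = {y : Fin n → ℝ | -c ≤ ∑ i, y i ∧ ∀ i : Fin n, (n+1) * y i ≤ c + ∑ i, y i} := by
  apply Set.Subset.antisymm
  · apply convexHull_min _ (convex_P n c)
    rintro y (⟨k, rfl⟩ | rfl)
    · have hs : ∑ i, (Pi.single k (-c) : Fin n → ℝ) i = -c := by
        simp [Pi.single_apply]
      constructor
      · rw [hs]
      · intro i
        rw [hs]
        have hn1 : (0:ℝ) ≤ (n:ℝ) + 1 := by positivity
        rcases eq_or_ne i k with rfl | hik
        · show ((n:ℝ) + 1) * (Pi.single i (-c) : Fin n → ℝ) i ≤ c + -c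
          rw [Pi.single_eq_same]
          nlinarith
        · show ((n:ℝ) + 1) * (Pi.single k (-c) : Fin n → ℝ) i ≤ c + -c
          rw [Pi.single_eq_of_ne hik]
          linarith
    · have hs : ∑ _i : Fin n, c = (n:ℝ) * c := by
        simp [Finset.sum_const, mul_comm]
      constructor
      · show -c ≤ ∑ _i : Fin n, c
        rw [hs]
        nlinarith [Nat.cast_nonneg (α := ℝ) n]
      · intro i
        show ((n:ℝ) + 1) * c ≤ c + ∑ _i : Fin n, c
        rw [hs]
        ring_nf
        linarith
  · rintro y ⟨h1, h2⟩
    rcases eq_or_lt_of_le hc with rfl | hcpos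
    · have hy : y = 0 := by
        have hsle : ((n:ℝ)+1) * (∑ i, y i) ≤ (n:ℝ) * ((0:ℝ) + ∑ i, y i) := by
          have h := Finset.sum_le_sum (s := (Finset.univ : Finset (Fin n)))
            (f := fun i => ((n:ℝ)+1) * y i) (g := fun _ => (0:ℝ) + ∑ i, y i)
            (fun i _ => h2 i)
          rwa [← Finset.mul_sum, Finset.sum_const, Finset.card_univ, Fintype.card_fin,
            nsmul_eq_mul] at h
        have hs0 : ∑ i, y i = 0 := by
          have h1' : (0:ℝ) ≤ ∑ i, y i := by simpa using h1
          nlinarith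
        apply nonpos_sum_zero n y _ (le_of_eq hs0.symm)
        intro i
        have := h2 i
        rw [hs0] at this
        nlinarith [this]
      subst hy
      apply subset_convexHull ℝ _
      right
      have : (fun _ : Fin n => (0:ℝ)) = (0 : Fin n → ℝ) := rfl
      exact this.symm
    · apply mem_hull_of_combo n _
        (Fin.snoc (fun k => (c + (∑ i, y i) - ((n:ℝ)+1) * y k) / (c * ((n:ℝ)+1)))
          ((c + ∑ i, y i) / (c * ((n:ℝ)+1))))
        (Fin.snoc (fun k => (Pi.single k (-c) : Fin n → ℝ)) (fun _ => c))
      · intro j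
        have hd : (0:ℝ) < c * ((n:ℝ)+1) := by positivity
        induction j using Fin.lastCases with
        | last =>
          rw [Fin.snoc_last]
          apply div_nonneg _ hd.le
          linarith
        | cast k =>
          rw [Fin.snoc_castSucc]
          apply div_nonneg _ hd.le
          have := h2 k
          linarith
      · rw [Fin.sum_univ_castSucc]
        simp only [Fin.snoc_castSucc, Fin.snoc_last]
        rw [← Finset.sum_div]
        simp only [Finset.sum_sub_distrib, Finset.sum_const, Finset.card_univ,
          Fintype.card_fin, nsmul_eq_mul, ← Finset.mul_sum]
        field_simp
        ring
      · intro j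
        induction j using Fin.lastCases with
        | last => rw [Fin.snoc_last]; exact Or.inr rfl
        | cast k => rw [Fin.snoc_castSucc]; exact Or.inl ⟨k, rfl⟩
      · intro i
        rw [Fin.sum_univ_castSucc]
        simp only [Fin.snoc_castSucc, Fin.snoc_last]
        have hterm : ∀ k : Fin n,
            (c + (∑ i, y i) - ((n:ℝ)+1) * y k) / (c * ((n:ℝ)+1)) * (Pi.single k (-c) : Fin n → ℝ) i
            = if i = k then -(c + (∑ i, y i) - ((n:ℝ)+1) * y k) / ((n:ℝ)+1) else 0 := by
          intro k
          rcases eq_or_ne i k with rfl | hik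
          · rw [if_pos rfl, Pi.single_eq_same]
            field_simp
            try ring
          · rw [if_neg hik, Pi.single_eq_of_ne hik, mul_zero]
        simp only [hterm, Finset.sum_ite_eq, Finset.mem_univ, if_pos]
        field_simp
        try ring

lemma extZero_nonpos (n : ℕ) (x : Fin n → ℝ) (h : ∀ i, x i ≤ 0) (j : Fin (n+1)) :
    extZero n x j ≤ 0 := by
  induction j using Fin.lastCases with
  | last => rw [extZero_last]
  | cast i => rw [extZero_castSucc]; exact h i

/-- Union characterization. -/
lemma union_char (n : ℕ) (c : ℝ) (y : Fin n → ℝ) :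
    y ∈ (⋃ π : Equiv.Perm (Fin (n+1)),
        stdAct n π '' {x : Fin n → ℝ | (∀ i, x i ≤ 0) ∧ -c ≤ ∑ i, x i})
      ↔ ∀ j : Fin (n+1), -c ≤ (∑ i, y i) - (n+1) * extZero n y j := by
  constructor
  · rintro h j
    rw [Set.mem_iUnion] at h
    obtain ⟨π, hπ⟩ := h
    rw [stdAct_image_mem] at hπ
    obtain ⟨hx1, hx2⟩ := hπ
    have hy : y = stdAct n π (stdAct n π⁻¹ y) := by
      rw [stdAct_mul, mul_inv_cancel, stdAct_one]
    set x := stdAct n π⁻¹ y with hxdef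
    have hsum : ∑ i, y i = (∑ i, x i) - ((n:ℝ)+1) * extZero n x (π.symm (Fin.last n)) := by
      conv_lhs => rw [hy]
      rw [sum_stdAct]
    have hYj : extZero n y j
        = extZero n x (π.symm j) - extZero n x (π.symm (Fin.last n)) := by
      conv_lhs => rw [hy]
      rw [extZero_stdAct]
    rw [hsum, hYj]
    have h3 : extZero n x (π.symm j) ≤ 0 := extZero_nonpos n x hx1 _
    have hn1 : (0:ℝ) ≤ (n:ℝ)+1 := by positivity
    nlinarith [hx2]
  · intro h
    obtain ⟨j₀, hj₀⟩ := Finite.exists_max (extZero n y)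
    rw [Set.mem_iUnion]
    refine ⟨Equiv.swap (Fin.last n) j₀, ?_⟩
    rw [stdAct_image_mem]
    set π := Equiv.swap (Fin.last n) j₀ with hπ
    constructor
    · intro i
      show extZero n y ((π⁻¹).symm i.castSucc) - extZero n y ((π⁻¹).symm (Fin.last n)) ≤ 0
      rw [symm_inv, symm_inv, hπ, Equiv.swap_apply_left]
      have := hj₀ (π i.castSucc)
      rw [hπ] at this
      linarith
    · rw [sum_stdAct, symm_inv, Equiv.swap_apply_left]
      have := h j₀
      push_cast
      linarith

theorem stmt_18 (n : ℕ) (hn : 2 ≤ n) (c : ℝ) (hc : 0 ≤ c) :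
    let H : Set (Fin n → ℝ) := {x | -c ≤ ∑ i, x i}
    let P : Set (Fin n → ℝ) := ⋂ π : Equiv.Perm (Fin (n+1)), stdAct n π '' H
    let verts : Set (Fin n → ℝ) :=
      (Set.range fun k : Fin n => (Pi.single k (-c) : Fin n → ℝ)) ∪ {fun _ => c}
    let D : Set (Fin n → ℝ) :=
      convexHull ℝ ((Set.range fun k : Fin n => (Pi.single k (-c) : Fin n → ℝ)) ∪ {0})
    P = convexHull ℝ verts ∧ P = ⋃ π : Equiv.Perm (Fin (n+1)), stdAct n π '' D := by
  intro H P verts D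
  constructor
  · ext y
    rw [hull_char n c hc]
    show y ∈ ⋂ π : Equiv.Perm (Fin (n+1)), stdAct n π '' H ↔ _
    rw [P_char n c y, P_char' n c y]
    exact Iff.rfl
  · ext y
    show y ∈ ⋂ π : Equiv.Perm (Fin (n+1)), stdAct n π '' H ↔ _
    rw [P_char n c y]
    have hD : D = {x : Fin n → ℝ | (∀ i, x i ≤ 0) ∧ -c ≤ ∑ i, x i} := D_char n c hc
    rw [show (⋃ π : Equiv.Perm (Fin (n+1)), stdAct n π '' D)
        = ⋃ π : Equiv.Perm (Fin (n+1)),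
            stdAct n π '' {x : Fin n → ℝ | (∀ i, x i ≤ 0) ∧ -c ≤ ∑ i, x i} by rw [hD]]
    exact (union_char n c y).symm
end
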